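/- Suppose L is generic, satisfies the triangle inequality, and s₂ + s₃ < (l_1 + … + l_n)/2. Then every vertex (I, J, K) of Γ(L) is joined to its mirror image (J, I, K) by a path in Γ(L) of length at most 6. -/

import Mathlib

open Finset

/-- `I ⊆ [n]` is *short*: the sum of its lengths is less than that of its complement. -/
def ShortSet {n : ℕ} (L : Fin n → ℝ) (I : Finset (Fin n)) : Prop :=
  ∑ i ∈ I, L i < ∑ i ∈ Iᶜ, L i

/-- `I ⊆ [n]` is *long*: the sum of its lengths is greater than that of its complement. -/
def LongSet {n : ℕ} (L : Fin n → ℝ) (I : Finset (Fin n)) : Prop :=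
  ∑ i ∈ Iᶜ, L i < ∑ i ∈ I, L i

/-- The length vector `L` is *generic*. -/
def GenericVec {n : ℕ} (L : Fin n → ℝ) : Prop :=
  ∀ I : Finset (Fin n), ∑ i ∈ I, L i ≠ ∑ i ∈ Iᶜ, L i

/-- `L` satisfies the triangle inequality: every singleton is short. -/
def TriangleIneq {n : ℕ} (L : Fin n → ℝ) : Prop :=
  ∀ i : Fin n, ShortSet L {i}

/-- Ordered triples of subsets of `[n]`. -/
abbrev LTriple (n : ℕ) := Finset (Fin n) × Finset (Fin n) × Finset (Fin n)

/-- An ordered triple `(I, J, K)` representing a vertex of `Γ(L)`: three pairwise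
disjoint nonempty short sets whose union is `[n]`. -/
def IsVertex {n : ℕ} (L : Fin n → ℝ) (V : LTriple n) : Prop :=
  V.1.Nonempty ∧ V.2.1.Nonempty ∧ V.2.2.Nonempty ∧
  ShortSet L V.1 ∧ ShortSet L V.2.1 ∧ ShortSet L V.2.2 ∧
  Disjoint V.1 V.2.1 ∧ Disjoint V.1 V.2.2 ∧ Disjoint V.2.1 V.2.2 ∧
  V.1 ∪ V.2.1 ∪ V.2.2 = Finset.univ

/-- Cyclic rotation of an ordered triple. -/
def rotT {n : ℕ} (V : LTriple n) : LTriple n := (V.2.1, V.2.2, V.1)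

/-- Two ordered triples represent the same cyclically ordered partition
(`(I,J,K)`, `(J,K,I)` and `(K,I,J)` are identified). -/
def CyclEq {n : ℕ} (V W : LTriple n) : Prop :=
  W = V ∨ W = rotT V ∨ W = rotT (rotT V)

/-- The mirror image of the vertex `(I, J, K)` is the vertex `(J, I, K)`. -/
def mirrorT {n : ℕ} (V : LTriple n) : LTriple n := (V.2.1, V.1, V.2.2)

/-- The elementary move on representatives: shift a nonempty proper subset
`S ⊊ I` to the second part, provided `J ∪ S` stays short. -/
def MoveStep {n : ℕ} (L : Fin n → ℝ) (V W : LTriple n) : Prop :=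
  ∃ S : Finset (Fin n), S.Nonempty ∧ S ⊂ V.1 ∧ ShortSet L (V.2.1 ∪ S) ∧
    W = (V.1 \ S, V.2.1 ∪ S, V.2.2)

/-- Adjacency in `Γ(L)`: one of the two vertices has a representative from which an
elementary move leads to a representative of the other. -/
def GammaAdj {n : ℕ} (L : Fin n → ℝ) (V W : LTriple n) : Prop :=
  (∃ V' W' : LTriple n, CyclEq V V' ∧ MoveStep L V' W' ∧ CyclEq W W') ∨
  (∃ W' V' : LTriple n, CyclEq W W' ∧ MoveStep L W' V' ∧ CyclEq V V')

/-- There is a path of length `m` (i.e. with `m` consecutive edges) in `Γ(L)`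
from the vertex `V` to the vertex `W`. -/
def GammaPath {n : ℕ} (L : Fin n → ℝ) (m : ℕ) (V W : LTriple n) : Prop :=
  ∃ f : ℕ → LTriple n, CyclEq V (f 0) ∧ CyclEq W (f m) ∧
    (∀ i ≤ m, IsVertex L (f i)) ∧ ∀ i < m, GammaAdj L (f i) (f (i + 1))

/-- The list of lengths sorted in nonincreasing order. -/
noncomputable def sortedDesc {n : ℕ} (L : Fin n → ℝ) : List ℝ :=
  List.insertionSort (· ≥ ·) (List.ofFn L)

/-- The second largest length (with multiplicity). -/
noncomputable def s2 {n : ℕ} (L : Fin n → ℝ) : ℝ := (sortedDesc L).getD 1 0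

/-- The third largest length (with multiplicity). -/
noncomputable def s3 {n : ℕ} (L : Fin n → ℝ) : ℝ := (sortedDesc L).getD 2 0


/-! ### Auxiliary machinery -/

section Aux

variable {n : ℕ} {L : Fin n → ℝ}

/-- Total weight. -/
private lemma wt_compl (I : Finset (Fin n)) :
    ∑ i ∈ Iᶜ, L i = ∑ i, L i - ∑ i ∈ I, L i := by
  have := Finset.sum_compl_add_sum I L
  linarith

private lemma short_iff {I : Finset (Fin n)} :
    ShortSet L I ↔ 2 * ∑ i ∈ I, L i < ∑ i, L i := by
  unfold ShortSet
  rw [wt_compl]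
  constructor <;> intro h <;> linarith

private lemma long_of_not_short (hgen : GenericVec L) {I : Finset (Fin n)}
    (h : ¬ ShortSet L I) : ∑ i, L i < 2 * ∑ i ∈ I, L i := by
  unfold ShortSet at h
  rw [wt_compl] at h
  have h2 := hgen I
  rw [wt_compl] at h2
  push_neg at h
  rcases lt_or_eq_of_le h with h3 | h3
  · linarith
  · exact absurd h3.symm (by intro hh; exact h2 (by linarith))

private lemma short_mono (hpos : ∀ i, 0 < L i) {I J : Finset (Fin n)}
    (hIJ : J ⊆ I) (h : ShortSet L I) : ShortSet L J := by
  rw [short_iff] at h ⊢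
  have : ∑ i ∈ J, L i ≤ ∑ i ∈ I, L i :=
    Finset.sum_le_sum_of_subset_of_nonneg hIJ (fun i _ _ => (hpos i).le)
  linarith

private lemma wt_union {A B : Finset (Fin n)} (h : Disjoint A B) :
    ∑ i ∈ A ∪ B, L i = ∑ i ∈ A, L i + ∑ i ∈ B, L i := Finset.sum_union h

private lemma wt_sdiff {A B : Finset (Fin n)} (h : B ⊆ A) :
    ∑ i ∈ A \ B, L i = ∑ i ∈ A, L i - ∑ i ∈ B, L i := Finset.sum_sdiff_eq_sub h

private lemma wt_union_single {B : Finset (Fin n)} {e : Fin n} (h : e ∉ B) :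
    ∑ i ∈ B ∪ {e}, L i = ∑ i ∈ B, L i + L e := by
  rw [Finset.union_comm, ← Finset.insert_eq, Finset.sum_insert h]
  ring

private lemma wt_single (e : Fin n) : ∑ i ∈ ({e} : Finset (Fin n)), L i = L e :=
  Finset.sum_singleton _ _

private lemma wt_nonneg (hpos : ∀ i, 0 < L i) (I : Finset (Fin n)) :
    0 ≤ ∑ i ∈ I, L i :=
  Finset.sum_nonneg (fun i _ => (hpos i).le)

private lemma nonempty_of_wt_pos (hpos : ∀ i, 0 < L i) {I : Finset (Fin n)}
    (h : 0 < ∑ i ∈ I, L i) : I.Nonempty := by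
  rcases I.eq_empty_or_nonempty with rfl | h2
  · simp at h
  · exact h2

private lemma wt_pos (hpos : ∀ i, 0 < L i) {I : Finset (Fin n)} (h : I.Nonempty) :
    0 < ∑ i ∈ I, L i := Finset.sum_pos (fun i _ => hpos i) h

/-! ### Cyclic equivalence -/

private lemma rot3 (V : LTriple n) : rotT (rotT (rotT V)) = V := rfl

private lemma cyclEq_rfl (V : LTriple n) : CyclEq V V := Or.inl rfl

private lemma cyclEq_rot (V : LTriple n) : CyclEq V (rotT V) := Or.inr (Or.inl rfl)

private lemma cyclEq_rot2 (V : LTriple n) : CyclEq V (rotT (rotT V)) :=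
  Or.inr (Or.inr rfl)

private lemma cyclEq_symm {V W : LTriple n} (h : CyclEq V W) : CyclEq W V := by
  rcases h with h | h | h
  · exact Or.inl h.symm
  · subst h; exact Or.inr (Or.inr (rot3 V).symm)
  · subst h; exact Or.inr (Or.inl (by rw [rot3]))

private lemma cyclEq_trans {V W U : LTriple n} (h1 : CyclEq V W) (h2 : CyclEq W U) :
    CyclEq V U := by
  rcases h1 with h1 | h1 | h1 <;> subst h1 <;> rcases h2 with h2 | h2 | h2 <;> subst h2
  · exact Or.inl rfl
  · exact Or.inr (Or.inl rfl)
  · exact Or.inr (Or.inr rfl)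
  · exact Or.inr (Or.inl rfl)
  · exact Or.inr (Or.inr rfl)
  · exact Or.inl (rot3 _).symm
  · exact Or.inr (Or.inr rfl)
  · exact Or.inl (rot3 _).symm
  · exact Or.inr (Or.inl (by rw [rot3]))

/-! ### Vertex lemmas -/

private lemma isVertex_rot {V : LTriple n} (h : IsVertex L V) : IsVertex L (rotT V) := by
  obtain ⟨h1, h2, h3, h4, h5, h6, h7, h8, h9, h10⟩ := h
  refine ⟨h2, h3, h1, h5, h6, h4, h9, h7.symm, h8.symm, ?_⟩
  rw [← h10]
  simp only [rotT]
  rw [Finset.union_comm, ← Finset.union_assoc]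

private lemma isVertex_of_cyclEq {V W : LTriple n} (h : CyclEq V W)
    (hv : IsVertex L V) : IsVertex L W := by
  rcases h with h | h | h <;> subst h
  · exact hv
  · exact isVertex_rot hv
  · exact isVertex_rot (isVertex_rot hv)

private lemma isVertex_swap23 {P Q R : Finset (Fin n)} (h : IsVertex L (P, Q, R)) :
    IsVertex L (P, R, Q) := by
  obtain ⟨h1, h2, h3, h4, h5, h6, h7, h8, h9, h10⟩ := h
  refine ⟨h1, h3, h2, h4, h6, h5, h8, h7, h9.symm, ?_⟩
  simp only at h10 ⊢
  rw [← h10, Finset.union_assoc, Finset.union_comm R Q, ← Finset.union_assoc]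

private lemma isVertex_mk {P Q R : Finset (Fin n)}
    (h1 : P.Nonempty) (h2 : Q.Nonempty) (h3 : R.Nonempty)
    (h4 : ShortSet L P) (h5 : ShortSet L Q) (h6 : ShortSet L R)
    (h7 : Disjoint P Q) (h8 : Disjoint P R) (h9 : Disjoint Q R)
    (h10 : P ∪ Q ∪ R = Finset.univ) : IsVertex L (P, Q, R) :=
  ⟨h1, h2, h3, h4, h5, h6, h7, h8, h9, h10⟩

/-! ### Adjacency lemmas -/

private lemma gammaAdj_symm {V W : LTriple n} (h : GammaAdj L V W) : GammaAdj L W V := by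
  rcases h with ⟨V', W', hV, hm, hW⟩ | ⟨W', V', hW, hm, hV⟩
  · exact Or.inr ⟨V', W', hV, hm, hW⟩
  · exact Or.inl ⟨W', V', hW, hm, hV⟩

private lemma gammaAdj_congr {V V₂ W W₂ : LTriple n} (hV : CyclEq V V₂) (hW : CyclEq W W₂)
    (h : GammaAdj L V₂ W₂) : GammaAdj L V W := by
  rcases h with ⟨V', W', hV', hm, hW'⟩ | ⟨W', V', hW', hm, hV'⟩
  · exact Or.inl ⟨V', W', cyclEq_trans hV hV', hm, cyclEq_trans hW hW'⟩
  · exact Or.inr ⟨W', V', cyclEq_trans hW hW', hm, cyclEq_trans hV hV'⟩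

private lemma ssubset_of_sub {S P : Finset (Fin n)} (h1 : S ⊆ P)
    (h2 : (P \ S).Nonempty) : S ⊂ P := by
  refine ⟨h1, fun hcon => ?_⟩
  obtain ⟨x, hx⟩ := h2
  rw [Finset.mem_sdiff] at hx
  exact hx.2 (hcon hx.1)

/-- move `S` from slot 1 to slot 2. -/
private lemma adj_t12 {P Q R S : Finset (Fin n)} (hS : S.Nonempty) (hSP : S ⊆ P)
    (hPS : (P \ S).Nonempty) (hsh : ShortSet L (Q ∪ S)) :
    GammaAdj L (P, Q, R) (P \ S, Q ∪ S, R) :=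
  Or.inl ⟨(P, Q, R), (P \ S, Q ∪ S, R), cyclEq_rfl _,
    ⟨S, hS, ssubset_of_sub hSP hPS, hsh, rfl⟩, cyclEq_rfl _⟩

/-- move `S` from slot 2 to slot 3. -/
private lemma adj_t23 {P Q R S : Finset (Fin n)} (hS : S.Nonempty) (hSP : S ⊆ Q)
    (hPS : (Q \ S).Nonempty) (hsh : ShortSet L (R ∪ S)) :
    GammaAdj L (P, Q, R) (P, Q \ S, R ∪ S) := by
  have h := adj_t12 (L := L) (R := P) hS hSP hPS hsh
  exact gammaAdj_congr (cyclEq_rot _) (cyclEq_rot _) h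

/-- move `S` from slot 2 to slot 1 (reverse move). -/
private lemma adj_t21 {P Q R S : Finset (Fin n)} (hS : S.Nonempty) (hSQ : S ⊆ Q)
    (hPd : Disjoint P S) (hP : P.Nonempty) (hsh : ShortSet L Q) :
    GammaAdj L (P, Q, R) (P ∪ S, Q \ S, R) := by
  refine Or.inr ⟨(P ∪ S, Q \ S, R), (P, Q, R), cyclEq_rfl _, ⟨S, hS, ?_, ?_, ?_⟩, cyclEq_rfl _⟩
  · refine ⟨Finset.subset_union_right, fun hcon => ?_⟩
    obtain ⟨x, hx⟩ := hP
    have : x ∈ S := hcon (Finset.mem_union_left _ hx)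
    exact (Finset.disjoint_left.mp hPd hx) this
  · rwa [Finset.sdiff_union_of_subset hSQ]
  · simp only [Prod.mk.injEq]
    exact ⟨(Finset.union_sdiff_cancel_right hPd).symm, (Finset.sdiff_union_of_subset hSQ).symm, trivial⟩

/-- move `S` from slot 3 to slot 2 (reverse move). -/
private lemma adj_t32 {P Q R S : Finset (Fin n)} (hS : S.Nonempty) (hSR : S ⊆ R)
    (hQd : Disjoint Q S) (hQ : Q.Nonempty) (hsh : ShortSet L R) :
    GammaAdj L (P, Q, R) (P, Q ∪ S, R \ S) := by
  refine Or.inr ⟨(Q ∪ S, R \ S, P), (Q, R, P), cyclEq_rot _, ⟨S, hS, ?_, ?_, ?_⟩, cyclEq_rot _⟩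
  · refine ⟨Finset.subset_union_right, fun hcon => ?_⟩
    obtain ⟨x, hx⟩ := hQ
    exact (Finset.disjoint_left.mp hQd hx) (hcon (Finset.mem_union_left _ hx))
  · rwa [Finset.sdiff_union_of_subset hSR]
  · simp only [Prod.mk.injEq]
    exact ⟨(Finset.union_sdiff_cancel_right hQd).symm, (Finset.sdiff_union_of_subset hSR).symm, trivial⟩

/-- move `S` from slot 1 to slot 3 (reverse move). -/
private lemma adj_t13 {P Q R S : Finset (Fin n)} (hS : S.Nonempty) (hSP : S ⊆ P)
    (hRd : Disjoint R S) (hR : R.Nonempty) (hsh : ShortSet L P) :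
    GammaAdj L (P, Q, R) (P \ S, Q, R ∪ S) := by
  refine Or.inr ⟨(R ∪ S, P \ S, Q), (R, P, Q), cyclEq_rot2 _, ⟨S, hS, ?_, ?_, ?_⟩, cyclEq_rot2 _⟩
  · refine ⟨Finset.subset_union_right, fun hcon => ?_⟩
    obtain ⟨x, hx⟩ := hR
    exact (Finset.disjoint_left.mp hRd hx) (hcon (Finset.mem_union_left _ hx))
  · rwa [Finset.sdiff_union_of_subset hSP]
  · simp only [Prod.mk.injEq]
    exact ⟨(Finset.union_sdiff_cancel_right hRd).symm, (Finset.sdiff_union_of_subset hSP).symm, trivial⟩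

/-! ### Path lemmas -/

private lemma gp_single {V : LTriple n} (hV : IsVertex L V) : GammaPath L 0 V V :=
  ⟨fun _ => V, cyclEq_rfl _, cyclEq_rfl _, fun _ _ => hV, fun i h => absurd h (Nat.not_lt_zero i)⟩

private lemma gp_cons {V W U : LTriple n} {m : ℕ} (hA : GammaAdj L V W)
    (hV : IsVertex L V) (hp : GammaPath L m W U) : GammaPath L (m + 1) V U := by
  obtain ⟨f, h0, hm, hvert, hadj⟩ := hp
  refine ⟨fun i => match i with | 0 => V | Nat.succ k => f k, cyclEq_rfl _, hm, ?_, ?_⟩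
  · intro i hi
    match i with
    | 0 => exact hV
    | Nat.succ k => exact hvert k (by omega)
  · intro i hi
    match i with
    | 0 => exact gammaAdj_congr (cyclEq_rfl _) (cyclEq_symm h0) hA
    | Nat.succ k => exact hadj k (by omega)

private lemma gp_snoc {V W U : LTriple n} {m : ℕ} (hp : GammaPath L m V W)
    (hA : GammaAdj L W U) (hU : IsVertex L U) : GammaPath L (m + 1) V U := by
  obtain ⟨f, h0, hm, hvert, hadj⟩ := hp
  refine ⟨fun i => if i ≤ m then f i else U, by simp [h0], ?_, ?_, ?_⟩
  · have : ¬ (m + 1 ≤ m) := by omega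
    simp only [this, if_false]
    exact cyclEq_rfl _
  · intro i hi
    by_cases h : i ≤ m
    · simp only [h, if_true]; exact hvert i h
    · simp only [h, if_false]; exact hU
  · intro i hi
    by_cases h : i + 1 ≤ m
    · simp only [if_pos (by omega : i ≤ m), if_pos h]
      exact hadj i (by omega)
    · have hi2 : i = m := by omega
      subst hi2
      simp only [if_pos (le_refl i), if_neg (by omega : ¬ i + 1 ≤ i)]
      exact gammaAdj_congr (cyclEq_symm hm) (cyclEq_rfl _) hA

private lemma gp_rev {V W : LTriple n} {m : ℕ} (hp : GammaPath L m V W) :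
    GammaPath L m W V := by
  obtain ⟨f, h0, hm, hvert, hadj⟩ := hp
  refine ⟨fun i => f (m - i), by simpa using hm, by simpa using h0, ?_, ?_⟩
  · intro i _
    exact hvert (m - i) (by omega)
  · intro i hi
    have h1 : m - (i + 1) + 1 = m - i := by omega
    have h2 := hadj (m - (i + 1)) (by omega)
    rw [h1] at h2
    exact gammaAdj_symm h2

private lemma gp_congr {V V' W W' : LTriple n} {m : ℕ} (hV : CyclEq V V')
    (hW : CyclEq W W') (hp : GammaPath L m V' W') : GammaPath L m V W := by
  obtain ⟨f, h0, hm, hvert, hadj⟩ := hp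
  exact ⟨f, cyclEq_trans hV h0, cyclEq_trans hW hm, hvert, hadj⟩

end Aux


/-! ### The swap schemes -/

section Schemes

variable {n : ℕ} {L : Fin n → ℝ}

/-- Swap the last two parts, escort `e` from the *second* part: 3 moves. -/
private lemma psw_plain_same (hpos : ∀ i, 0 < L i) (hgen : GenericVec L)
    (htri : TriangleIneq L) {Z X Y : Finset (Fin n)} {e : Fin n}
    (hv : IsVertex L (Z, X, Y)) (he : e ∈ X) (hX2 : (X \ {e}).Nonempty)
    (hYe : ShortSet L (Y ∪ {e})) (hZe : ¬ ShortSet L (Z ∪ {e})) :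
    GammaPath L 3 (Z, X, Y) (Z, Y, X) := by
  have hv0 := hv
  obtain ⟨hZn, hXn, hYn, hZs, hXs, hYs, dZX, dZY, dXY, hcov⟩ := hv
  simp only at hZn hXn hYn hZs hXs hYs dZX dZY dXY hcov
  have hmem : ∀ i : Fin n, i ∈ Z ∨ i ∈ X ∨ i ∈ Y := by
    intro i
    have : i ∈ Z ∪ X ∪ Y := hcov ▸ Finset.mem_univ i
    simpa [Finset.mem_union, or_assoc] using this
  have heZ : e ∉ Z := Finset.disjoint_right.mp dZX he
  have heY : e ∉ Y := Finset.disjoint_left.mp dXY he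
  have hdZXY : Disjoint (Z ∪ X) Y := Finset.disjoint_union_left.mpr ⟨dZY, dXY⟩
  have htot : ∑ i ∈ Z, L i + ∑ i ∈ X, L i + ∑ i ∈ Y, L i = ∑ i, L i := by
    rw [← hcov, wt_union hdZXY, wt_union dZX]
  have hEX : ({e} : Finset (Fin n)) ⊆ X := Finset.singleton_subset_iff.mpr he
  have hid1 : X \ (X \ {e}) = {e} := by
    rw [Finset.sdiff_sdiff_self_left, Finset.inter_singleton_of_mem he]
  have hZel : ∑ i, L i < 2 * (∑ i ∈ Z, L i + L e) := by
    have := long_of_not_short hgen hZe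
    rwa [wt_union_single heZ] at this
  have dYXE : Disjoint Y (X \ {e}) :=
    Finset.disjoint_of_subset_right Finset.sdiff_subset dXY.symm
  have hsh1 : ShortSet L (Y ∪ (X \ {e})) := by
    rw [short_iff, wt_union dYXE, wt_sdiff hEX, wt_single]
    linarith
  have dEY : Disjoint ({e} : Finset (Fin n)) Y := Finset.disjoint_singleton_left.mpr heY
  have hid2 : (Y ∪ (X \ {e})) \ Y = X \ {e} := Finset.union_sdiff_cancel_left dYXE
  have hid3 : ({e} ∪ Y) \ {e} = Y := Finset.union_sdiff_cancel_left dEY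
  have hid4 : (X \ {e}) ∪ {e} = X := Finset.sdiff_union_of_subset hEX
  -- adjacencies
  have adj1 : GammaAdj L (Z, X, Y) (Z, {e}, Y ∪ (X \ {e})) := by
    have h := adj_t23 (L := L) (P := Z) (Q := X) (R := Y) (S := X \ {e}) hX2
      Finset.sdiff_subset (by rw [hid1]; exact Finset.singleton_nonempty e) hsh1
    rwa [hid1] at h
  have adj2 : GammaAdj L (Z, {e}, Y ∪ (X \ {e})) (Z, {e} ∪ Y, X \ {e}) := by
    have h := adj_t32 (L := L) (P := Z) (Q := {e}) (R := Y ∪ (X \ {e})) (S := Y) hYn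
      Finset.subset_union_left dEY (Finset.singleton_nonempty e) hsh1
    rwa [hid2] at h
  have adj3 : GammaAdj L (Z, {e} ∪ Y, X \ {e}) (Z, Y, X) := by
    have h := adj_t23 (L := L) (P := Z) (Q := {e} ∪ Y) (R := X \ {e}) (S := {e})
      (Finset.singleton_nonempty e) Finset.subset_union_left
      (by rw [hid3]; exact hYn) (by rw [hid4]; exact hXs)
    rwa [hid3, hid4] at h
  -- vertices
  have dZE : Disjoint Z ({e} : Finset (Fin n)) := Finset.disjoint_singleton_right.mpr heZ
  have dZXE : Disjoint Z (X \ {e}) := Finset.disjoint_of_subset_right Finset.sdiff_subset dZX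
  have v1 : IsVertex L (Z, {e}, Y ∪ (X \ {e})) := by
    refine isVertex_mk hZn (Finset.singleton_nonempty e)
      (hYn.mono Finset.subset_union_left) hZs (htri e) hsh1 dZE
      (Finset.disjoint_union_right.mpr ⟨dZY, dZXE⟩)
      (Finset.disjoint_union_right.mpr ⟨dEY, Finset.disjoint_singleton_left.mpr (by simp)⟩) ?_
    ext i
    simp only [Finset.mem_union, Finset.mem_sdiff, Finset.mem_singleton, Finset.mem_univ,
      iff_true]
    have := hmem i
    by_cases hie : i = e <;> tauto
  have v2 : IsVertex L (Z, {e} ∪ Y, X \ {e}) := by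
    refine isVertex_mk hZn (hYn.mono Finset.subset_union_right) hX2 hZs
      (by rwa [Finset.union_comm] at hYe) (short_mono hpos Finset.sdiff_subset hXs)
      (Finset.disjoint_union_right.mpr ⟨dZE, dZY⟩) dZXE
      (Finset.disjoint_union_left.mpr
        ⟨Finset.disjoint_singleton_left.mpr (by simp), dYXE.symm.symm⟩) ?_
    ext i
    simp only [Finset.mem_union, Finset.mem_sdiff, Finset.mem_singleton, Finset.mem_univ,
      iff_true]
    have := hmem i
    by_cases hie : i = e <;> tauto
  have v3 : IsVertex L (Z, Y, X) := isVertex_swap23 hv0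
  exact gp_cons adj1 hv0 (gp_cons adj2 v1 (gp_cons adj3 v2 (gp_single v3)))

/-- Swap the last two parts, escort `e` from the *third* part: 3 moves. -/
private lemma psw_plain_diff (hpos : ∀ i, 0 < L i) (hgen : GenericVec L)
    (htri : TriangleIneq L) {Z X Y : Finset (Fin n)} {e : Fin n}
    (hv : IsVertex L (Z, X, Y)) (he : e ∈ Y) (hY2 : (Y \ {e}).Nonempty)
    (hXe : ShortSet L (X ∪ {e})) (hZe : ¬ ShortSet L (Z ∪ {e})) :
    GammaPath L 3 (Z, X, Y) (Z, Y, X) := by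
  have hv0 := hv
  obtain ⟨hZn, hXn, hYn, hZs, hXs, hYs, dZX, dZY, dXY, hcov⟩ := hv
  simp only at hZn hXn hYn hZs hXs hYs dZX dZY dXY hcov
  have hmem : ∀ i : Fin n, i ∈ Z ∨ i ∈ X ∨ i ∈ Y := by
    intro i
    have : i ∈ Z ∪ X ∪ Y := hcov ▸ Finset.mem_univ i
    simpa [Finset.mem_union, or_assoc] using this
  have heZ : e ∉ Z := Finset.disjoint_right.mp dZY he
  have heX : e ∉ X := Finset.disjoint_right.mp dXY he
  have hdZXY : Disjoint (Z ∪ X) Y := Finset.disjoint_union_left.mpr ⟨dZY, dXY⟩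
  have htot : ∑ i ∈ Z, L i + ∑ i ∈ X, L i + ∑ i ∈ Y, L i = ∑ i, L i := by
    rw [← hcov, wt_union hdZXY, wt_union dZX]
  have hEY : ({e} : Finset (Fin n)) ⊆ Y := Finset.singleton_subset_iff.mpr he
  have hid1 : Y \ (Y \ {e}) = {e} := by
    rw [Finset.sdiff_sdiff_self_left, Finset.inter_singleton_of_mem he]
  have hZel : ∑ i, L i < 2 * (∑ i ∈ Z, L i + L e) := by
    have := long_of_not_short hgen hZe
    rwa [wt_union_single heZ] at this
  have dXYE : Disjoint X (Y \ {e}) :=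
    Finset.disjoint_of_subset_right Finset.sdiff_subset dXY
  have hsh1 : ShortSet L (X ∪ (Y \ {e})) := by
    rw [short_iff, wt_union dXYE, wt_sdiff hEY, wt_single]
    linarith
  have dEX : Disjoint ({e} : Finset (Fin n)) X := Finset.disjoint_singleton_left.mpr heX
  have hid2 : (X ∪ (Y \ {e})) \ X = Y \ {e} := Finset.union_sdiff_cancel_left dXYE
  have hid3 : (Y \ {e}) ∪ {e} = Y := Finset.sdiff_union_of_subset hEY
  have hid4 : ({e} ∪ X) \ {e} = X := Finset.union_sdiff_cancel_left dEX
  -- adjacencies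
  have adj1 : GammaAdj L (Z, X, Y) (Z, X ∪ (Y \ {e}), {e}) := by
    have h := adj_t32 (L := L) (P := Z) (Q := X) (R := Y) (S := Y \ {e}) hY2
      Finset.sdiff_subset dXYE hXn hYs
    rwa [hid1] at h
  have adj2 : GammaAdj L (Z, X ∪ (Y \ {e}), {e}) (Z, Y \ {e}, {e} ∪ X) := by
    have h := adj_t23 (L := L) (P := Z) (Q := X ∪ (Y \ {e})) (R := {e}) (S := X) hXn
      Finset.subset_union_left (by rw [hid2]; exact hY2)
      (by rwa [Finset.union_comm] at hXe)
    rwa [hid2] at h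
  have adj3 : GammaAdj L (Z, Y \ {e}, {e} ∪ X) (Z, Y, X) := by
    have h := adj_t32 (L := L) (P := Z) (Q := Y \ {e}) (R := {e} ∪ X) (S := {e})
      (Finset.singleton_nonempty e) Finset.subset_union_left
      (Finset.disjoint_singleton_right.mpr (by simp)) hY2
      (by rwa [Finset.union_comm] at hXe)
    rwa [hid3, hid4] at h
  -- vertices
  have dZE : Disjoint Z ({e} : Finset (Fin n)) := Finset.disjoint_singleton_right.mpr heZ
  have dZYE : Disjoint Z (Y \ {e}) := Finset.disjoint_of_subset_right Finset.sdiff_subset dZY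
  have v1 : IsVertex L (Z, X ∪ (Y \ {e}), {e}) := by
    refine isVertex_mk hZn (hXn.mono Finset.subset_union_left)
      (Finset.singleton_nonempty e) hZs hsh1 (htri e)
      (Finset.disjoint_union_right.mpr ⟨dZX, dZYE⟩) dZE
      (Finset.disjoint_union_left.mpr
        ⟨dEX.symm, Finset.disjoint_singleton_right.mpr (by simp)⟩) ?_
    ext i
    simp only [Finset.mem_union, Finset.mem_sdiff, Finset.mem_singleton, Finset.mem_univ,
      iff_true]
    have := hmem i
    by_cases hie : i = e <;> tauto
  have v2 : IsVertex L (Z, Y \ {e}, {e} ∪ X) := by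
    refine isVertex_mk hZn hY2 ((Finset.singleton_nonempty e).mono Finset.subset_union_left)
      hZs (short_mono hpos Finset.sdiff_subset hYs)
      (by rwa [Finset.union_comm] at hXe)
      dZYE (Finset.disjoint_union_right.mpr ⟨dZE, dZX⟩)
      (Finset.disjoint_union_right.mpr
        ⟨Finset.disjoint_singleton_right.mpr (by simp), dXYE.symm⟩) ?_
    ext i
    simp only [Finset.mem_union, Finset.mem_sdiff, Finset.mem_singleton, Finset.mem_univ,
      iff_true]
    have := hmem i
    by_cases hie : i = e <;> tauto
  have v3 : IsVertex L (Z, Y, X) := isVertex_swap23 hv0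
  exact gp_cons adj1 hv0 (gp_cons adj2 v1 (gp_cons adj3 v2 (gp_single v3)))

/-- Parked swap, escort from the second part: 5 moves. -/
private lemma psw_park_same (hpos : ∀ i, 0 < L i) (hgen : GenericVec L)
    (htri : TriangleIneq L) {Z X Y T : Finset (Fin n)} {e : Fin n}
    (hv : IsVertex L (Z, X, Y)) (hT : T.Nonempty) (hTX : T ⊆ X)
    (he : e ∈ X \ T) (hX3 : ((X \ T) \ {e}).Nonempty)
    (hZT : ShortSet L (Z ∪ T)) (hYe : ShortSet L (Y ∪ {e}))
    (hZTe : ¬ ShortSet L (Z ∪ T ∪ {e})) :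
    GammaPath L 5 (Z, X, Y) (Z, Y, X) := by
  have hv0 := hv
  obtain ⟨hZn, hXn, hYn, hZs, hXs, hYs, dZX, dZY, dXY, hcov⟩ := hv
  simp only at hZn hXn hYn hZs hXs hYs dZX dZY dXY hcov
  have hmem : ∀ i : Fin n, i ∈ Z ∨ i ∈ X ∨ i ∈ Y := by
    intro i
    have : i ∈ Z ∪ X ∪ Y := hcov ▸ Finset.mem_univ i
    simpa [Finset.mem_union, or_assoc] using this
  have dZT : Disjoint Z T := Finset.disjoint_of_subset_right hTX dZX
  have dXTT : Disjoint (X \ T) T := Finset.sdiff_disjoint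
  have adj1 : GammaAdj L (Z, X, Y) (Z ∪ T, X \ T, Y) :=
    adj_t21 hT hTX dZT hZn hXs
  have v1 : IsVertex L (Z ∪ T, X \ T, Y) := by
    refine isVertex_mk (hZn.mono Finset.subset_union_left)
      ⟨e, he⟩ hYn hZT (short_mono hpos Finset.sdiff_subset hXs) hYs
      (Finset.disjoint_union_left.mpr
        ⟨Finset.disjoint_of_subset_right Finset.sdiff_subset dZX, dXTT.symm⟩)
      (Finset.disjoint_union_left.mpr ⟨dZY, Finset.disjoint_of_subset_left hTX dXY⟩)
      (Finset.disjoint_of_subset_left Finset.sdiff_subset dXY) ?_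
    ext i
    simp only [Finset.mem_union, Finset.mem_sdiff, Finset.mem_univ, iff_true]
    have := hmem i
    by_cases hiT : i ∈ T <;> tauto
  have mid : GammaPath L 3 (Z ∪ T, X \ T, Y) (Z ∪ T, Y, X \ T) := by
    exact psw_plain_same hpos hgen htri v1 he hX3 hYe hZTe
  have dXTY : Disjoint (X \ T) T := dXTT
  have adj5 : GammaAdj L (Z ∪ T, Y, X \ T) (Z, Y, X) := by
    have h := adj_t13 (L := L) (P := Z ∪ T) (Q := Y) (R := X \ T) (S := T) hT
      Finset.subset_union_right dXTT (⟨e, he⟩ : (X \ T).Nonempty) hZT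
    rw [Finset.union_sdiff_cancel_right dZT, Finset.sdiff_union_of_subset hTX] at h
    exact h
  have v5 : IsVertex L (Z, Y, X) := isVertex_swap23 hv0
  exact gp_cons adj1 hv0 (gp_snoc mid adj5 v5)

/-- Parked swap, escort from the third part: 5 moves. -/
private lemma psw_park_diff (hpos : ∀ i, 0 < L i) (hgen : GenericVec L)
    (htri : TriangleIneq L) {Z X Y T : Finset (Fin n)} {e : Fin n}
    (hv : IsVertex L (Z, X, Y)) (hT : T.Nonempty) (hTX : T ⊆ X)
    (hXT : (X \ T).Nonempty) (he : e ∈ Y) (hY2 : (Y \ {e}).Nonempty)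
    (hZT : ShortSet L (Z ∪ T)) (hXe : ShortSet L ((X \ T) ∪ {e}))
    (hZTe : ¬ ShortSet L (Z ∪ T ∪ {e})) :
    GammaPath L 5 (Z, X, Y) (Z, Y, X) := by
  have hv0 := hv
  obtain ⟨hZn, hXn, hYn, hZs, hXs, hYs, dZX, dZY, dXY, hcov⟩ := hv
  simp only at hZn hXn hYn hZs hXs hYs dZX dZY dXY hcov
  have hmem : ∀ i : Fin n, i ∈ Z ∨ i ∈ X ∨ i ∈ Y := by
    intro i
    have : i ∈ Z ∪ X ∪ Y := hcov ▸ Finset.mem_univ i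
    simpa [Finset.mem_union, or_assoc] using this
  have dZT : Disjoint Z T := Finset.disjoint_of_subset_right hTX dZX
  have dXTT : Disjoint (X \ T) T := Finset.sdiff_disjoint
  have adj1 : GammaAdj L (Z, X, Y) (Z ∪ T, X \ T, Y) :=
    adj_t21 hT hTX dZT hZn hXs
  have v1 : IsVertex L (Z ∪ T, X \ T, Y) := by
    refine isVertex_mk (hZn.mono Finset.subset_union_left)
      hXT hYn hZT (short_mono hpos Finset.sdiff_subset hXs) hYs
      (Finset.disjoint_union_left.mpr
        ⟨Finset.disjoint_of_subset_right Finset.sdiff_subset dZX, dXTT.symm⟩)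
      (Finset.disjoint_union_left.mpr ⟨dZY, Finset.disjoint_of_subset_left hTX dXY⟩)
      (Finset.disjoint_of_subset_left Finset.sdiff_subset dXY) ?_
    ext i
    simp only [Finset.mem_union, Finset.mem_sdiff, Finset.mem_univ, iff_true]
    have := hmem i
    by_cases hiT : i ∈ T <;> tauto
  have mid : GammaPath L 3 (Z ∪ T, X \ T, Y) (Z ∪ T, Y, X \ T) := by
    exact psw_plain_diff hpos hgen htri v1 he hY2 hXe hZTe
  have adj5 : GammaAdj L (Z ∪ T, Y, X \ T) (Z, Y, X) := by
    have h := adj_t13 (L := L) (P := Z ∪ T) (Q := Y) (R := X \ T) (S := T) hT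
      Finset.subset_union_right dXTT hXT hZT
    rw [Finset.union_sdiff_cancel_right dZT, Finset.sdiff_union_of_subset hTX] at h
    exact h
  have v5 : IsVertex L (Z, Y, X) := isVertex_swap23 hv0
  exact gp_cons adj1 hv0 (gp_snoc mid adj5 v5)

end Schemes

/-! ### The two heaviest of the rest, and a greedy subset-sum lemma -/

section Counting

variable {n : ℕ} {L : Fin n → ℝ}

private lemma sorted_countP_le_getD :
    ∀ (l : List ℝ) (k : ℕ) (v : ℝ), List.Pairwise (· ≥ ·) l → k < l.length →
      k + 1 ≤ l.countP (fun a => decide (v ≤ a)) → v ≤ l.getD k 0 := by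
  intro l
  induction l with
  | nil => intro k v _ h; simp at h
  | cons a t ih =>
    intro k v hs hk hc
    rcases List.pairwise_cons.mp hs with ⟨ha, ht⟩
    by_cases hva : v ≤ a
    · match k with
      | 0 => simpa using hva
      | Nat.succ k =>
        rw [List.getD_cons_succ]
        refine ih k v ht (by simpa using hk) ?_
        rw [List.countP_cons_of_pos (by simpa using hva)] at hc
        omega
    · exfalso
      have h0 : (a :: t).countP (fun a => decide (v ≤ a)) = 0 := by
        refine List.countP_eq_zero.mpr ?_
        intro b hb
        rcases List.mem_cons.mp hb with rfl | hb
        · simpa using hva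
        · have : b ≤ a := ha b hb
          simp only [decide_eq_true_eq]
          intro hvb
          exact hva (le_trans hvb this)
      omega

private lemma countP_ofFn_ge (v : ℝ) (idxs : List (Fin n)) (hnd : idxs.Nodup)
    (hall : ∀ i ∈ idxs, v ≤ L i) :
    idxs.length ≤ (List.ofFn L).countP (fun a => decide (v ≤ a)) := by
  rw [List.ofFn_eq_map, List.countP_map]
  have hsub : idxs.Subperm (List.finRange n) :=
    List.subperm_of_subset hnd (fun a _ => List.mem_finRange a)
  calc idxs.length = idxs.countP ((fun a => decide (v ≤ a)) ∘ L) := by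
        rw [List.countP_eq_length.mpr]
        intro a ha
        simpa using hall a ha
    _ ≤ _ := hsub.countP_le _

private lemma getD_sortedDesc_ge (hn : 3 ≤ n) (v : ℝ) (k : ℕ) (hk : k < n)
    (h : k + 1 ≤ (List.ofFn L).countP (fun a => decide (v ≤ a))) :
    v ≤ (sortedDesc L).getD k 0 := by
  have hperm : (sortedDesc L).Perm (List.ofFn L) := List.perm_insertionSort _ _
  have hsort : List.Pairwise (· ≥ ·) (sortedDesc L) := List.pairwise_insertionSort _ _
  have hlen : (sortedDesc L).length = n := by
    rw [hperm.length_eq, List.length_ofFn]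
  refine sorted_countP_le_getD _ k v hsort (by omega) ?_
  rwa [hperm.countP_eq]

private lemma pair_le_s2s3 (hn : 3 ≤ n) {p x y : Fin n}
    (hp : ∀ i, L i ≤ L p) (hxy : x ≠ y) (hxp : x ≠ p) (hyp : y ≠ p) :
    L x + L y ≤ s2 L + s3 L := by
  -- z : the index among x, y with the larger value
  rcases le_total (L x) (L y) with hle | hle
  · -- L y = max, L x = min
    have h2 : L y ≤ s2 L := by
      refine getD_sortedDesc_ge hn _ 1 (by omega) ?_
      have := countP_ofFn_ge (L := L) (L y) [p, y]
        (by simp [hyp.symm]) (by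
          intro i hi
          rcases List.mem_cons.mp hi with rfl | hi
          · exact hp y
          · simp at hi; subst hi; exact le_refl _)
      simpa using this
    have h3 : L x ≤ s3 L := by
      refine getD_sortedDesc_ge hn _ 2 (by omega) ?_
      have := countP_ofFn_ge (L := L) (L x) [p, x, y]
        (by simp [hxp.symm, hyp.symm, hxy]) (by
          intro i hi
          simp only [List.mem_cons, List.not_mem_nil, or_false] at hi
          rcases hi with rfl | rfl | rfl
          · exact hp x
          · exact le_refl _
          · exact hle)
      simpa using this
    unfold s2 s3 at *
    linarith
  · have h2 : L x ≤ s2 L := by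
      refine getD_sortedDesc_ge hn _ 1 (by omega) ?_
      have := countP_ofFn_ge (L := L) (L x) [p, x]
        (by simp [hxp.symm]) (by
          intro i hi
          rcases List.mem_cons.mp hi with rfl | hi
          · exact hp x
          · simp at hi; subst hi; exact le_refl _)
      simpa using this
    have h3 : L y ≤ s3 L := by
      refine getD_sortedDesc_ge hn _ 2 (by omega) ?_
      have := countP_ofFn_ge (L := L) (L y) [p, y, x]
        (by simp [hxp.symm, hyp.symm, hxy.symm]) (by
          intro i hi
          simp only [List.mem_cons, List.not_mem_nil, or_false] at hi
          rcases hi with rfl | rfl | rfl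
          · exact hp y
          · exact le_refl _
          · exact hle)
      simpa using this
    unfold s2 s3 at *
    linarith

/-- The key consequence of `s₂ + s₃ < half`: any pair avoiding the argmax is short. -/
private lemma exists_argmax_pairs (hn : 3 ≤ n)
    (hs : s2 L + s3 L < (∑ i, L i) / 2) :
    ∃ p : Fin n, (∀ i, L i ≤ L p) ∧
      ∀ x y : Fin n, x ≠ y → x ≠ p → y ≠ p → 2 * (L x + L y) < ∑ i, L i := by
  have : Nonempty (Fin n) := ⟨⟨0, by omega⟩⟩
  obtain ⟨p, _, hp⟩ := Finset.exists_max_image Finset.univ L Finset.univ_nonempty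
  refine ⟨p, fun i => hp i (Finset.mem_univ i), fun x y hxy hxp hyp => ?_⟩
  have := pair_le_s2s3 hn (fun i => hp i (Finset.mem_univ i)) hxy hxp hyp
  linarith

/-- Greedy subset selection in a window of width `w`. -/
private lemma greedy (hpos : ∀ i, 0 < L i) {w lo : ℝ} (hlo : 0 ≤ lo) :
    ∀ R : Finset (Fin n), lo < ∑ i ∈ R, L i → (∀ x ∈ R, L x ≤ w) →
      ∃ T ⊆ R, lo < ∑ i ∈ T, L i ∧ ∑ i ∈ T, L i ≤ lo + w := by
  intro R
  induction R using Finset.strongInduction with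
  | _ R ih =>
    intro hR hbd
    by_cases hc : ∑ i ∈ R, L i ≤ lo + w
    · exact ⟨R, Finset.Subset.refl R, hR, hc⟩
    · push_neg at hc
      have hRne : R.Nonempty := nonempty_of_wt_pos hpos (lt_of_le_of_lt hlo hR)
      obtain ⟨x, hx⟩ := hRne
      have hsub : R.erase x ⊂ R := Finset.erase_ssubset hx
      have hsum : ∑ i ∈ R.erase x, L i + L x = ∑ i ∈ R, L i :=
        Finset.sum_erase_add R L hx
      have h1 : lo < ∑ i ∈ R.erase x, L i := by
        have := hbd x hx
        linarith
      obtain ⟨T, hT1, hT2, hT3⟩ := ih _ hsub h1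
        (fun y hy => hbd y (Finset.mem_of_mem_erase hy))
      exact ⟨T, hT1.trans (Finset.erase_subset x R), hT2, hT3⟩

end Counting

/-! ### Scheme selection -/

section Select

variable {n : ℕ} {L : Fin n → ℝ}

/-- There is a path of length at most 5 from `(Z,X,Y)` to `(Z,Y,X)`. -/
private def Psw (L : Fin n → ℝ) (Z X Y : Finset (Fin n)) : Prop :=
  ∃ m ≤ 5, GammaPath L m (Z, X, Y) (Z, Y, X)

private lemma ne_half (hgen : GenericVec L) (I : Finset (Fin n)) :
    2 * ∑ i ∈ I, L i ≠ ∑ i, L i := by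
  intro h
  exact hgen I (by rw [wt_compl]; linarith)

private lemma vertex_tot {Z X Y : Finset (Fin n)} (hv : IsVertex L (Z, X, Y)) :
    ∑ i ∈ Z, L i + ∑ i ∈ X, L i + ∑ i ∈ Y, L i = ∑ i, L i := by
  obtain ⟨_, _, _, _, _, _, dZX, dZY, dXY, hcov⟩ := hv
  simp only at dZX dZY dXY hcov
  rw [← hcov, wt_union (Finset.disjoint_union_left.mpr ⟨dZY, dXY⟩), wt_union dZX]

private lemma sdiff_single_ne {X : Finset (Fin n)} {g : Fin n} (h2 : 2 ≤ X.card)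
    (hg : g ∈ X) : (X \ {g}).Nonempty := by
  have hsub : ({g} : Finset (Fin n)) ⊆ X := Finset.singleton_subset_iff.mpr hg
  have : 0 < (X \ {g}).card := by
    rw [Finset.card_sdiff_of_subset hsub, Finset.card_singleton]
    omega
  exact Finset.card_pos.mp this

/-- SV selector: `X` has ≥ 3 elements and its maximum is `Y`-small. -/
private lemma sel_SV (hpos : ∀ i, 0 < L i) (hgen : GenericVec L) (htri : TriangleIneq L)
    {Z X Y : Finset (Fin n)} {e : Fin n} (hv : IsVertex L (Z, X, Y))
    (hcard : 3 ≤ X.card) (he : e ∈ X) (hmax : ∀ x ∈ X, L x ≤ L e)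
    (hYe : ShortSet L (Y ∪ {e})) : Psw L Z X Y := by
  have hv0 := hv
  obtain ⟨hZn, hXn, hYn, hZs, hXs, hYs, dZX, dZY, dXY, hcov⟩ := hv
  simp only at hZn hXn hYn hZs hXs hYs dZX dZY dXY hcov
  have htot := vertex_tot hv0
  have heZ : e ∉ Z := Finset.disjoint_right.mp dZX he
  have heY : e ∉ Y := Finset.disjoint_left.mp dXY he
  have hYe' : 2 * (∑ i ∈ Y, L i + L e) < ∑ i, L i := by
    have := short_iff.mp hYe
    rwa [wt_union_single heY] at this
  by_cases hZe : ShortSet L (Z ∪ {e})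
  · -- parked scheme
    have hZe' : 2 * (∑ i ∈ Z, L i + L e) < ∑ i, L i := by
      have := short_iff.mp hZe
      rwa [wt_union_single heZ] at this
    -- second maximum
    have hX'ne : (X.erase e).Nonempty := by
      have : 0 < (X.erase e).card := by
        rw [Finset.card_erase_of_mem he]
        omega
      exact Finset.card_pos.mp this
    obtain ⟨x₀, hx₀m, hx₀max⟩ := Finset.exists_max_image (X.erase e) L hX'ne
    have hx₀X : x₀ ∈ X := Finset.mem_of_mem_erase hx₀m
    have hx₀e : x₀ ≠ e := Finset.ne_of_mem_erase hx₀m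
    set R := (X.erase e).erase x₀ with hR
    have hRX : R ⊆ X := (Finset.erase_subset _ _).trans (Finset.erase_subset _ _)
    have hsumR : ∑ i ∈ R, L i = ∑ i ∈ X, L i - L e - L x₀ := by
      have h1 : ∑ i ∈ X.erase e, L i + L e = ∑ i ∈ X, L i :=
        Finset.sum_erase_add X L he
      have h2 : ∑ i ∈ R, L i + L x₀ = ∑ i ∈ X.erase e, L i :=
        Finset.sum_erase_add _ L hx₀m
      linarith
    set lo := (∑ i, L i) / 2 - ∑ i ∈ Z, L i - L e with hlo
    have hlo0 : 0 ≤ lo := by rw [hlo]; linarith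
    have hRgt : lo < ∑ i ∈ R, L i := by
      rw [hsumR, hlo]
      have := hmax x₀ hx₀X
      linarith
    obtain ⟨T, hTR, hT1, hT2⟩ := greedy hpos hlo0 R hRgt
      (fun x hx => hmax x (hRX hx))
    have hTX : T ⊆ X := hTR.trans hRX
    have hTne : T.Nonempty := nonempty_of_wt_pos hpos (lt_of_le_of_lt hlo0 hT1)
    have heT : e ∉ T := fun hcon =>
      Finset.notMem_erase e X (Finset.mem_of_mem_erase (hTR hcon))
    have hx₀T : x₀ ∉ T := fun hcon => Finset.notMem_erase x₀ _ (hTR hcon)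
    have dZT : Disjoint Z T := Finset.disjoint_of_subset_right hTX dZX
    have hZT : ShortSet L (Z ∪ T) := by
      rw [short_iff, wt_union dZT]
      have hne := ne_half hgen (Z ∪ T)
      rw [wt_union dZT] at hne
      have hle : 2 * (∑ i ∈ Z, L i + ∑ i ∈ T, L i) ≤ ∑ i, L i := by
        rw [hlo] at hT2
        linarith
      exact lt_of_le_of_ne hle hne
    have he2 : e ∈ X \ T := Finset.mem_sdiff.mpr ⟨he, heT⟩
    have hX3 : ((X \ T) \ {e}).Nonempty :=
      ⟨x₀, by simp [Finset.mem_sdiff, hx₀X, hx₀T, hx₀e]⟩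
    have heZT : e ∉ Z ∪ T := by simp [Finset.mem_union, heZ, heT]
    have hZTe : ¬ ShortSet L (Z ∪ T ∪ {e}) := by
      intro hcon
      rw [short_iff, wt_union_single heZT, wt_union dZT] at hcon
      rw [hlo] at hT1
      linarith
    exact ⟨5, by norm_num, psw_park_same hpos hgen htri hv0 hTne hTX he2 hX3 hZT hYe hZTe⟩
  · -- plain scheme
    have hX2 : (X \ {e}).Nonempty := sdiff_single_ne (by omega) he
    exact ⟨3, by norm_num, psw_plain_same hpos hgen htri hv0 he hX2 hYe hZe⟩

end Select

section Select2

variable {n : ℕ} {L : Fin n → ℝ}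

/-- DP selector: large `g ∈ X` and escort `e ∈ Y` with `{g,e}` short. -/
private lemma sel_DP (hpos : ∀ i, 0 < L i) (hgen : GenericVec L) (htri : TriangleIneq L)
    {Z X Y : Finset (Fin n)} {g e : Fin n} (hv : IsVertex L (Z, X, Y))
    (hg : g ∈ X) (he : e ∈ Y) (hX2 : 2 ≤ X.card) (hY2 : 2 ≤ Y.card)
    (hYg : ¬ ShortSet L (Y ∪ {g})) (hZe : ¬ ShortSet L (Z ∪ {e}))
    (hpair : 2 * (L g + L e) < ∑ i, L i) : Psw L Z X Y := by
  have hv0 := hv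
  obtain ⟨hZn, hXn, hYn, hZs, hXs, hYs, dZX, dZY, dXY, hcov⟩ := hv
  simp only at hZn hXn hYn hZs hXs hYs dZX dZY dXY hcov
  have htot := vertex_tot hv0
  have hgY : g ∉ Y := Finset.disjoint_left.mp dXY hg
  have hgZ : g ∉ Z := Finset.disjoint_right.mp dZX hg
  have heZ : e ∉ Z := Finset.disjoint_right.mp dZY he
  have heX : e ∉ X := Finset.disjoint_right.mp dXY he
  have hge : e ∉ ({g} : Finset (Fin n)) := by
    simp only [Finset.mem_singleton]
    intro hcon
    exact heX (hcon ▸ hg)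
  have hgX : ({g} : Finset (Fin n)) ⊆ X := Finset.singleton_subset_iff.mpr hg
  have hT : (X \ {g}).Nonempty := sdiff_single_ne hX2 hg
  have hXT : X \ (X \ {g}) = {g} := by
    rw [Finset.sdiff_sdiff_self_left, Finset.inter_singleton_of_mem hg]
  have hsumT : ∑ i ∈ X \ {g}, L i = ∑ i ∈ X, L i - L g := by
    rw [wt_sdiff hgX, wt_single]
  have hYg' : ∑ i, L i < 2 * (∑ i ∈ Y, L i + L g) := by
    have := long_of_not_short hgen hYg
    rwa [wt_union_single hgY] at this
  have hZe' : ∑ i, L i < 2 * (∑ i ∈ Z, L i + L e) := by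
    have := long_of_not_short hgen hZe
    rwa [wt_union_single heZ] at this
  have dZT : Disjoint Z (X \ {g}) :=
    Finset.disjoint_of_subset_right Finset.sdiff_subset dZX
  have hZT : ShortSet L (Z ∪ (X \ {g})) := by
    rw [short_iff, wt_union dZT, hsumT]
    linarith
  have hXe : ShortSet L ((X \ (X \ {g})) ∪ {e}) := by
    rw [hXT, short_iff, wt_union_single hge, wt_single]
    linarith
  have hTpos : 0 < ∑ i ∈ X \ {g}, L i := wt_pos hpos hT
  have heZT : e ∉ Z ∪ (X \ {g}) := by
    simp only [Finset.mem_union, Finset.mem_sdiff]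
    push_neg
    exact ⟨heZ, fun h => absurd h heX⟩
  have hZTe : ¬ ShortSet L (Z ∪ (X \ {g}) ∪ {e}) := by
    intro hcon
    rw [short_iff, wt_union_single heZT, wt_union dZT, hsumT] at hcon
    linarith
  have hY2' : (Y \ {e}).Nonempty := sdiff_single_ne hY2 he
  have hXTne : (X \ (X \ {g})).Nonempty := by
    rw [hXT]; exact Finset.singleton_nonempty g
  exact ⟨5, by norm_num, psw_park_diff hpos hgen htri hv0 hT Finset.sdiff_subset
    hXTne he hY2' hZT hXe hZTe⟩

/-- Every part of size ≥ 2 either has a "large" element or yields a scheme. -/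
private lemma getLarge (hpos : ∀ i, 0 < L i) (hgen : GenericVec L) (htri : TriangleIneq L)
    {Z X Y : Finset (Fin n)} (hv : IsVertex L (Z, X, Y)) (hcard : 2 ≤ X.card) :
    (∃ g ∈ X, ¬ ShortSet L (Y ∪ {g}) ∧ ¬ ShortSet L (Z ∪ {g})) ∨
      Psw L Z X Y ∨ Psw L Y X Z := by
  have hvYXZ : IsVertex L (Y, X, Z) := isVertex_swap23 (isVertex_rot (isVertex_rot hv))
  by_cases h3 : 3 ≤ X.card
  · have hXn : X.Nonempty := Finset.card_pos.mp (by omega)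
    obtain ⟨e, he, hmax⟩ := Finset.exists_max_image X L hXn
    by_cases hYe : ShortSet L (Y ∪ {e})
    · exact Or.inr (Or.inl (sel_SV hpos hgen htri hv h3 he hmax hYe))
    · by_cases hZe : ShortSet L (Z ∪ {e})
      · exact Or.inr (Or.inr (sel_SV hpos hgen htri hvYXZ h3 he hmax hZe))
      · exact Or.inl ⟨e, he, hYe, hZe⟩
  · have h2 : X.card = 2 := by omega
    obtain ⟨a, b, hab, rfl⟩ := Finset.card_eq_two.mp h2
    have hv0 := hv
    obtain ⟨hZn, hXn, hYn, hZs, hXs, hYs, dZX, dZY, dXY, hcov⟩ := hv0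
    simp only at hZn hXn hYn hZs hXs hYs dZX dZY dXY hcov
    have htot := vertex_tot hv
    have ha : a ∈ ({a, b} : Finset (Fin n)) := by simp
    have hb : b ∈ ({a, b} : Finset (Fin n)) := by simp
    have haY : a ∉ Y := Finset.disjoint_left.mp dXY ha
    have hbZ : b ∉ Z := Finset.disjoint_right.mp dZX hb
    have hsX : ∑ i ∈ ({a, b} : Finset (Fin n)), L i = L a + L b := Finset.sum_pair hab
    have hXa : (({a, b} : Finset (Fin n)) \ {a}).Nonempty :=
      ⟨b, Finset.mem_sdiff.mpr ⟨hb, by simp [hab.symm]⟩⟩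
    have hXb : (({a, b} : Finset (Fin n)) \ {b}).Nonempty :=
      ⟨a, Finset.mem_sdiff.mpr ⟨ha, by simp [hab]⟩⟩
    by_cases hYa : ShortSet L (Y ∪ {a})
    · by_cases hZa : ShortSet L (Z ∪ {a})
      · by_cases hZb : ShortSet L (Z ∪ {b})
        · exfalso
          have h1 : 2 * (∑ i ∈ Y, L i + L a) < ∑ i, L i := by
            have := short_iff.mp hYa
            rwa [wt_union_single haY] at this
          have h2' : 2 * (∑ i ∈ Z, L i + L b) < ∑ i, L i := by
            have := short_iff.mp hZb
            rwa [wt_union_single hbZ] at this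
          rw [hsX] at htot
          linarith
        · by_cases hYb : ShortSet L (Y ∪ {b})
          · exact Or.inr (Or.inl ⟨3, by norm_num,
              psw_plain_same hpos hgen htri hv hb hXb hYb hZb⟩)
          · exact Or.inl ⟨b, hb, hYb, hZb⟩
      · exact Or.inr (Or.inl ⟨3, by norm_num,
          psw_plain_same hpos hgen htri hv ha hXa hYa hZa⟩)
    · by_cases hZa : ShortSet L (Z ∪ {a})
      · exact Or.inr (Or.inr ⟨3, by norm_num,
          psw_plain_same hpos hgen htri hvYXZ ha hXa hZa hYa⟩)
      · exact Or.inl ⟨a, ha, hYa, hZa⟩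

/-- The big disjunction: some labeled swap scheme applies. -/
private def Psw6 (L : Fin n → ℝ) (A B C : Finset (Fin n)) : Prop :=
  Psw L A B C ∨ Psw L A C B ∨ Psw L B C A ∨ Psw L B A C ∨ Psw L C A B ∨ Psw L C B A

private lemma psw6_rot {A B C : Finset (Fin n)} (h : Psw6 L B C A) : Psw6 L A B C := by
  unfold Psw6 at h ⊢
  tauto

private lemma cov_all2 (hpos : ∀ i, 0 < L i) (hgen : GenericVec L) (htri : TriangleIneq L)
    {p : Fin n} (hpair : ∀ x y : Fin n, x ≠ y → x ≠ p → y ≠ p → 2 * (L x + L y) < ∑ i, L i)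
    {A B C : Finset (Fin n)} (hv : IsVertex L (A, B, C))
    (h2A : 2 ≤ A.card) (h2B : 2 ≤ B.card) (h2C : 2 ≤ C.card) : Psw6 L A B C := by
  have hvBCA : IsVertex L (B, C, A) := isVertex_rot hv
  have hvCAB : IsVertex L (C, A, B) := isVertex_rot hvBCA
  have hvBAC : IsVertex L (B, A, C) := isVertex_swap23 hvBCA
  have hv0 := hv
  obtain ⟨hAn, hBn, hCn, hAs, hBs, hCs, dAB, dAC, dBC, hcov⟩ := hv
  simp only at hAn hBn hCn hAs hBs hCs dAB dAC dBC
  rcases getLarge hpos hgen htri hvCAB h2A with ⟨gA, hgA, hgAB, hgAC⟩ | h | h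
  · rcases getLarge hpos hgen htri (isVertex_rot hvCAB) h2B with ⟨gB, hgB, hgBC, hgBA⟩ | h | h
    · rcases getLarge hpos hgen htri hvBCA h2C with ⟨gC, hgC, hgCA, hgCB⟩ | h | h
      · -- three larges
        have hABne : gA ≠ gB := fun hcon => Finset.disjoint_left.mp dAB hgA (hcon ▸ hgB)
        have hACne : gA ≠ gC := fun hcon => Finset.disjoint_left.mp dAC hgA (hcon ▸ hgC)
        have hBCne : gB ≠ gC := fun hcon => Finset.disjoint_left.mp dBC hgB (hcon ▸ hgC)
        by_cases hpA : gA = p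
        · -- use gB, gC on (A, B, C)
          have hpB : gB ≠ p := fun h => hABne (hpA.trans h.symm)
          have hpC : gC ≠ p := fun h => hACne (hpA.trans h.symm)
          exact Or.inl (sel_DP hpos hgen htri hv0 hgB hgC h2B h2C hgBC hgCA
            (hpair gB gC hBCne hpB hpC))
        · by_cases hpB : gB = p
          · -- use gA, gC on (B, A, C)
            have hpC : gC ≠ p := fun h => hBCne (hpB.trans h.symm)
            refine Or.inr (Or.inr (Or.inr (Or.inl (sel_DP hpos hgen htri hvBAC hgA hgC
              h2A h2C hgAC hgCB ?_))))
            exact hpair gA gC hACne hpA hpC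
          · -- use gA, gB on (C, A, B)
            refine Or.inr (Or.inr (Or.inr (Or.inr (Or.inl (sel_DP hpos hgen htri hvCAB
              hgA hgB h2A h2B hgAB hgBC ?_)))))
            exact hpair gA gB hABne hpA hpB
      · exact Or.inr (Or.inr (Or.inl h))
      · exact Or.inr (Or.inl h)
    · exact Or.inl h
    · exact Or.inr (Or.inr (Or.inr (Or.inr (Or.inr h))))
  · exact Or.inr (Or.inr (Or.inr (Or.inr (Or.inl h))))
  · exact Or.inr (Or.inr (Or.inr (Or.inl h)))

end Select2

section Select3

variable {n : ℕ} {L : Fin n → ℝ}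

private lemma cov_single (hpos : ∀ i, 0 < L i) (hgen : GenericVec L) (htri : TriangleIneq L)
    {p : Fin n} (hpair : ∀ x y : Fin n, x ≠ y → x ≠ p → y ≠ p → 2 * (L x + L y) < ∑ i, L i)
    {A B C : Finset (Fin n)} (hv : IsVertex L (A, B, C))
    (h1A : A.card = 1) (h2B : 2 ≤ B.card) (h2C : 2 ≤ C.card) : Psw6 L A B C := by
  obtain ⟨a, rfl⟩ := Finset.card_eq_one.mp h1A
  have hv0 := hv
  have hvACB : IsVertex L ({a}, C, B) := isVertex_swap23 hv
  obtain ⟨hAn, hBn, hCn, hAs, hBs, hCs, dAB, dAC, dBC, hcov⟩ := hv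
  simp only at hAn hBn hCn hAs hBs hCs dAB dAC dBC
  have ha : a ∈ ({a} : Finset (Fin n)) := Finset.mem_singleton_self a
  rcases getLarge hpos hgen htri hv0 h2B with ⟨gB, hgB, hgBC, hgBA⟩ | h | h
  · rcases getLarge hpos hgen htri hvACB h2C with ⟨gC, hgC, hgCB, hgCA⟩ | h | h
    · -- two larges
      have haB : a ≠ gB := fun h => Finset.disjoint_left.mp dAB ha (h ▸ hgB)
      have haC : a ≠ gC := fun h => Finset.disjoint_left.mp dAC ha (h ▸ hgC)
      have hBCne : gB ≠ gC := fun h => Finset.disjoint_left.mp dBC hgB (h ▸ hgC)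
      by_cases hpB : gB = p
      · exfalso
        have hap : a ≠ p := fun h => haB (h.trans hpB.symm)
        have hCp : gC ≠ p := fun h => hBCne (hpB.trans h.symm)
        have hpr := hpair a gC haC hap hCp
        have hlong := long_of_not_short hgen hgCA
        rw [wt_union_single (by simpa using haC.symm : gC ∉ ({a} : Finset (Fin n))),
          wt_single] at hlong
        linarith
      · by_cases hpC : gC = p
        · exfalso
          have hap : a ≠ p := fun h => haC (h.trans hpC.symm)
          have hBp : gB ≠ p := fun h => hBCne (h.trans hpC.symm)
          have hpr := hpair a gB haB hap hBp
          have hlong := long_of_not_short hgen hgBA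
          rw [wt_union_single (by simpa using haB.symm : gB ∉ ({a} : Finset (Fin n))),
            wt_single] at hlong
          linarith
        · exact Or.inl (sel_DP hpos hgen htri hv0 hgB hgC h2B h2C hgBC hgCA
            (hpair gB gC hBCne hpB hpC))
    · exact Or.inr (Or.inl h)
    · exact Or.inr (Or.inr (Or.inl h))
  · exact Or.inl h
  · exact Or.inr (Or.inr (Or.inr (Or.inr (Or.inr h))))

private lemma cov_two (hpos : ∀ i, 0 < L i) (hgen : GenericVec L) (htri : TriangleIneq L)
    {p : Fin n} (hpair : ∀ x y : Fin n, x ≠ y → x ≠ p → y ≠ p → 2 * (L x + L y) < ∑ i, L i)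
    {A B C : Finset (Fin n)} (hv : IsVertex L (A, B, C))
    (h1A : A.card = 1) (h1B : B.card = 1) : Psw6 L A B C := by
  obtain ⟨a, rfl⟩ := Finset.card_eq_one.mp h1A
  obtain ⟨b, rfl⟩ := Finset.card_eq_one.mp h1B
  have hv0 := hv
  have hvACB : IsVertex L ({a}, C, {b}) := isVertex_swap23 hv
  obtain ⟨hAn, hBn, hCn, hAs, hBs, hCs, dAB, dAC, dBC, hcov⟩ := hv
  simp only at hAn hBn hCn hAs hBs hCs dAB dAC dBC
  have ha : a ∈ ({a} : Finset (Fin n)) := Finset.mem_singleton_self a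
  have hb : b ∈ ({b} : Finset (Fin n)) := Finset.mem_singleton_self b
  have hab : a ≠ b := fun h => Finset.disjoint_left.mp dAB ha (h ▸ hb)
  have htot := vertex_tot hv0
  rw [wt_single, wt_single] at htot
  have hAs' : 2 * L a < ∑ i, L i := by
    have := short_iff.mp hAs
    rwa [wt_single] at this
  have hBs' : 2 * L b < ∑ i, L i := by
    have := short_iff.mp hBs
    rwa [wt_single] at this
  have hCs' : 2 * ∑ i ∈ C, L i < ∑ i, L i := short_iff.mp hCs
  by_cases hpa : a = p
  · -- b ≠ p
    have hbp : b ≠ p := fun h => hab (hpa.trans h.symm)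
    by_cases h2C : 2 ≤ C.card
    · rcases getLarge hpos hgen htri hvACB h2C with ⟨gC, hgC, hgCB, hgCA⟩ | h | h
      · exfalso
        have hbC : b ≠ gC := fun h => Finset.disjoint_left.mp dBC hb (h ▸ hgC)
        have hCp : gC ≠ p := fun h =>
          Finset.disjoint_left.mp dAC ha ((hpa.trans h.symm) ▸ hgC)
        have hpr := hpair b gC hbC hbp hCp
        have hlong := long_of_not_short hgen hgCB
        rw [wt_union_single (by simpa using hbC.symm : gC ∉ ({b} : Finset (Fin n))),
          wt_single] at hlong
        linarith
      · exact Or.inr (Or.inl h)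
      · exact Or.inr (Or.inr (Or.inl h))
    · exfalso
      have h1C : C.card = 1 := by
        have := Finset.card_pos.mpr hCn
        omega
      obtain ⟨c, rfl⟩ := Finset.card_eq_one.mp h1C
      have hc : c ∈ ({c} : Finset (Fin n)) := Finset.mem_singleton_self c
      have hbc : b ≠ c := fun h => Finset.disjoint_left.mp dBC hb (h ▸ hc)
      have hcp : c ≠ p := fun h => Finset.disjoint_left.mp dAC ha ((hpa.trans h.symm) ▸ hc)
      have hpr := hpair b c hbc hbp hcp
      rw [wt_single] at hCs' htot
      linarith
  · by_cases hpb : b = p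
    · have hap : a ≠ p := hpa
      by_cases h2C : 2 ≤ C.card
      · rcases getLarge hpos hgen htri hvACB h2C with ⟨gC, hgC, hgCB, hgCA⟩ | h | h
        · exfalso
          have haC : a ≠ gC := fun h => Finset.disjoint_left.mp dAC ha (h ▸ hgC)
          have hCp : gC ≠ p := fun h =>
            Finset.disjoint_left.mp dBC hb ((hpb.trans h.symm) ▸ hgC)
          have hpr := hpair a gC haC hap hCp
          have hlong := long_of_not_short hgen hgCA
          rw [wt_union_single (by simpa using haC.symm : gC ∉ ({a} : Finset (Fin n))),
            wt_single] at hlong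
          linarith
        · exact Or.inr (Or.inl h)
        · exact Or.inr (Or.inr (Or.inl h))
      · exfalso
        have h1C : C.card = 1 := by
          have := Finset.card_pos.mpr hCn
          omega
        obtain ⟨c, rfl⟩ := Finset.card_eq_one.mp h1C
        have hc : c ∈ ({c} : Finset (Fin n)) := Finset.mem_singleton_self c
        have hac : a ≠ c := fun h => Finset.disjoint_left.mp dAC ha (h ▸ hc)
        have hcp : c ≠ p := fun h => Finset.disjoint_left.mp dBC hb ((hpb.trans h.symm) ▸ hc)
        have hpr := hpair a c hac hap hcp
        rw [wt_single] at hCs' htot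
        linarith
    · exfalso
      have hpr := hpair a b hab hpa hpb
      linarith

/-- Coverage : every vertex admits one of the six labeled swap schemes. -/
private lemma coverage (hpos : ∀ i, 0 < L i) (hgen : GenericVec L) (htri : TriangleIneq L)
    {p : Fin n} (hpair : ∀ x y : Fin n, x ≠ y → x ≠ p → y ≠ p → 2 * (L x + L y) < ∑ i, L i)
    {A B C : Finset (Fin n)} (hv : IsVertex L (A, B, C)) : Psw6 L A B C := by
  have hvBCA : IsVertex L (B, C, A) := isVertex_rot hv
  have hvCAB : IsVertex L (C, A, B) := isVertex_rot hvBCA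
  have hAn := hv.1
  have hBn := hv.2.1
  have hCn := hv.2.2.1
  simp only at hAn hBn hCn
  have h1A : 1 ≤ A.card := Finset.card_pos.mpr hAn
  have h1B : 1 ≤ B.card := Finset.card_pos.mpr hBn
  have h1C : 1 ≤ C.card := Finset.card_pos.mpr hCn
  by_cases h2A : 2 ≤ A.card
  · by_cases h2B : 2 ≤ B.card
    · by_cases h2C : 2 ≤ C.card
      · exact cov_all2 hpos hgen htri hpair hv h2A h2B h2C
      · exact psw6_rot (psw6_rot (cov_single hpos hgen htri hpair hvCAB
          (by omega) h2A h2B))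
    · by_cases h2C : 2 ≤ C.card
      · exact psw6_rot (cov_single hpos hgen htri hpair hvBCA (by omega) h2C h2A)
      · exact psw6_rot (cov_two hpos hgen htri hpair hvBCA (by omega) (by omega))
  · by_cases h2B : 2 ≤ B.card
    · by_cases h2C : 2 ≤ C.card
      · exact cov_single hpos hgen htri hpair hv (by omega) h2B h2C
      · exact psw6_rot (psw6_rot (cov_two hpos hgen htri hpair hvCAB
          (by omega) (by omega)))
    · exact cov_two hpos hgen htri hpair hv (by omega) (by omega)

end Select3

/-- If `L` is generic, satisfies the triangle inequality, and
`s₂ + s₃ < (l₁ + ⋯ + lₙ)/2`, then every vertex `(I,J,K)` of `Γ(L)` is joined to its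
mirror image `(J,I,K)` by a path of length at most 6. -/
theorem mirror_at_most_6 (n : ℕ) (hn : 3 ≤ n) (L : Fin n → ℝ)
    (hpos : ∀ i, 0 < L i) (hgen : GenericVec L) (htri : TriangleIneq L)
    (hs : s2 L + s3 L < (∑ i, L i) / 2) :
    ∀ V : LTriple n, IsVertex L V → ∃ m ≤ 6, GammaPath L m V (mirrorT V) := by
  obtain ⟨p, hp, hpair⟩ := exists_argmax_pairs hn hs
  intro V hV
  obtain ⟨I, J, K⟩ := V
  have hcov := coverage hpos hgen htri hpair hV
  rcases hcov with h | h | h | h | h | h <;> obtain ⟨m, hm, hpath⟩ := h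
  · exact ⟨m, by omega,
      gp_congr (cyclEq_rfl _) (cyclEq_rot ((J, I, K) : LTriple n)) hpath⟩
  · exact ⟨m, by omega,
      gp_congr (cyclEq_rfl _) (cyclEq_rot ((J, I, K) : LTriple n)) (gp_rev hpath)⟩
  · exact ⟨m, by omega,
      gp_congr (cyclEq_rot ((I, J, K) : LTriple n)) (cyclEq_rfl _) hpath⟩
  · exact ⟨m, by omega,
      gp_congr (cyclEq_rot ((I, J, K) : LTriple n)) (cyclEq_rfl _) (gp_rev hpath)⟩
  · exact ⟨m, by omega,
      gp_congr (cyclEq_rot2 ((I, J, K) : LTriple n)) (cyclEq_rot2 ((J, I, K) : LTriple n))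
        hpath⟩
  · exact ⟨m, by omega,
      gp_congr (cyclEq_rot2 ((I, J, K) : LTriple n)) (cyclEq_rot2 ((J, I, K) : LTriple n))
        (gp_rev hpath)⟩
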